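/- Suppose each f_i is convex and L_i-smooth and x* is a global minimizer of F (so ∇F(x*) = 0). Then for all x, w ∈ ℝ^d and every ρ ∈ (0,1], ρ·D(x) + (1 − ρ)·D(w) ≤ 2ρ(F(x) − F(x*)) + (1 − ρ)·D(w); in particular D(x) ≤ 2(F(x) − F(x*)), where D(w) = (1/n)∑_{i=1}^n (1/L_i)‖∇f_i(w) − ∇f_i(x*)‖². -/

import Mathlib

open MeasureTheory Finset
open scoped RealInnerProductSpace BigOperators

abbrev Euc (d : ℕ) := EuclideanSpace ℝ (Fin d)

/-- The finite-sum objective `F(x) = (1/n) ∑ f i x`. -/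
noncomputable def avgF {d : ℕ} (n : ℕ) (f : Fin n → Euc d → ℝ) (x : Euc d) : ℝ :=
  (1 / (n : ℝ)) * ∑ i, f i x

/-- The gradient of the finite-sum objective, `∇F(x) = (1/n) ∑ ∇f i x`. -/
noncomputable def avgG {d : ℕ} (n : ℕ) (f' : Fin n → Euc d → Euc d) (x : Euc d) : Euc d :=
  (1 / (n : ℝ)) • ∑ i, f' i x

/-- The effective sampling variance `V_e(q; x, w)`. -/
noncomputable def Ve {d : ℕ} (n : ℕ) (f' : Fin n → Euc d → Euc d)
    (q : Fin n → ℝ) (x w : Euc d) : ℝ :=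
  (1 / (n : ℝ) ^ 2) * ∑ i, (1 / q i) * ‖f' i x - f' i w‖ ^ 2

/-- The average smoothness constant `L̄ = (1/n) ∑ L i`. -/
noncomputable def Lbar (n : ℕ) (L : Fin n → ℝ) : ℝ := (1 / (n : ℝ)) * ∑ i, L i

/-- The importance sampling distribution `p^IS_i = L i / (n L̄)`. -/
noncomputable def pIS (n : ℕ) (L : Fin n → ℝ) (i : Fin n) : ℝ :=
  L i / ((n : ℝ) * Lbar n L)

/-- `D(w) = (1/n) ∑ (1 / L i) ‖∇f i w - ∇f i x*‖²`. -/
noncomputable def Dfun {d : ℕ} (n : ℕ) (f' : Fin n → Euc d → Euc d) (L : Fin n → ℝ)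
    (xstar w : Euc d) : ℝ :=
  (1 / (n : ℝ)) * ∑ i, (1 / L i) * ‖f' i w - f' i xstar‖ ^ 2



-- descent lemma
lemma descent {d : ℕ} (f : Euc d → ℝ) (g : Euc d → Euc d) (L : ℝ) (hL : 0 ≤ L)
    (hgrad : ∀ x, HasGradientAt f (g x) x)
    (hsm : ∀ x y, ‖g x - g y‖ ≤ L * ‖x - y‖) (x y : Euc d) :
    f y ≤ f x + ⟪g x, y - x⟫ + L / 2 * ‖y - x‖ ^ 2 := by
  set v := y - x with hv
  have hgcont : Continuous g := by
    have : LipschitzWith (Real.toNNReal L) g := by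
      apply LipschitzWith.of_dist_le_mul
      intro a b
      simpa [dist_eq_norm, Real.coe_toNNReal L hL] using hsm a b
    exact this.continuous
  have key : ∀ t : ℝ, HasDerivAt (fun t : ℝ => f (x + t • v)) ⟪g (x + t • v), v⟫ t := by
    intro t
    have h1 : HasFDerivAt f (InnerProductSpace.toDual ℝ (Euc d) (g (x + t • v))) (x + t • v) :=
      (hgrad _).hasFDerivAt
    have h2 : HasDerivAt (fun t : ℝ => x + t • v) v t := by
      simpa using ((hasDerivAt_id t).smul_const v).const_add x
    have h3 := h1.comp_hasDerivAt t h2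
    simp only [InnerProductSpace.toDual_apply_apply] at h3
    exact h3
  have hcont : Continuous fun t : ℝ => ⟪g (x + t • v), v⟫ :=
    (hgcont.comp (by continuity : Continuous fun t : ℝ => x + t • v)).inner continuous_const
  have ftc : ∫ t in (0:ℝ)..1, ⟪g (x + t • v), v⟫ = f (x + (1:ℝ) • v) - f (x + (0:ℝ) • v) := by
    exact intervalIntegral.integral_eq_sub_of_hasDerivAt (fun t _ => key t)
      (hcont.intervalIntegrable 0 1)
  have hxy : x + (1:ℝ) • v = y := by simp [hv]
  have hx0 : x + (0:ℝ) • v = x := by simp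
  rw [hxy, hx0] at ftc
  have hmono : ∫ t in (0:ℝ)..1, ⟪g (x + t • v), v⟫ ≤
      ∫ t in (0:ℝ)..1, (⟪g x, v⟫ + L * t * ‖v‖ ^ 2) := by
    apply intervalIntegral.integral_mono_on (by norm_num) (hcont.intervalIntegrable 0 1)
    · exact (Continuous.intervalIntegrable (by fun_prop) 0 1)
    · intro t ht
      have h1 : ⟪g (x + t • v) - g x, v⟫ ≤ ‖g (x + t • v) - g x‖ * ‖v‖ :=
        real_inner_le_norm _ _
      have h2 : ‖g (x + t • v) - g x‖ ≤ L * (t * ‖v‖) := by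
        have := hsm (x + t • v) x
        simpa [norm_smul, abs_of_nonneg ht.1, mul_assoc] using this
      have h3 : ⟪g (x + t • v), v⟫ - ⟪g x, v⟫ = ⟪g (x + t • v) - g x, v⟫ := by
        rw [inner_sub_left]
      nlinarith [norm_nonneg v, sq_nonneg (‖v‖), mul_le_mul_of_nonneg_right h2 (norm_nonneg v)]
  have hint : ∫ t in (0:ℝ)..1, (⟪g x, v⟫ + L * t * ‖v‖ ^ 2) = ⟪g x, v⟫ + L / 2 * ‖v‖ ^ 2 := by
    have h1 : IntervalIntegrable (fun _ : ℝ => (⟪g x, v⟫ : ℝ)) MeasureTheory.volume 0 1 :=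
      intervalIntegrable_const
    have h2 : IntervalIntegrable (fun t : ℝ => L * t * ‖v‖ ^ 2) MeasureTheory.volume 0 1 :=
      Continuous.intervalIntegrable (by fun_prop) 0 1
    rw [intervalIntegral.integral_add h1 h2]
    have he : (fun t : ℝ => L * t * ‖v‖ ^ 2) = fun t : ℝ => t * (L * ‖v‖ ^ 2) := by
      ext t; ring
    rw [he, intervalIntegral.integral_mul_const, integral_id]
    simp
    ring
  have : f y - f x ≤ ⟪g x, v⟫ + L / 2 * ‖v‖ ^ 2 := by
    rw [← ftc, ← hint]; exact hmono
  linarith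

lemma coco {d : ℕ} (f : Euc d → ℝ) (g : Euc d → Euc d) (L : ℝ) (hL : 0 < L)
    (hgrad : ∀ x, HasGradientAt f (g x) x)
    (hconv : ∀ x y, f x + ⟪g x, y - x⟫ ≤ f y)
    (hsm : ∀ x y, ‖g x - g y‖ ≤ L * ‖x - y‖) (x y : Euc d) :
    1 / (2 * L) * ‖g x - g y‖ ^ 2 ≤ f x - f y - ⟪g y, x - y⟫ := by
  set Δ := g x - g y with hΔ
  set z := x - L⁻¹ • Δ with hz
  have h1 : f y + ⟪g y, z - y⟫ ≤ f z := hconv y z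
  have h2 : f z ≤ f x + ⟪g x, z - x⟫ + L / 2 * ‖z - x‖ ^ 2 :=
    descent f g L hL.le hgrad hsm x z
  have hzx : z - x = -(L⁻¹ • Δ) := by rw [hz]; abel
  have hzy : z - y = (x - y) - L⁻¹ • Δ := by rw [hz]; abel
  have e1 : ⟪g x, z - x⟫ = -(L⁻¹ * ⟪g x, Δ⟫) := by
    rw [hzx, inner_neg_right, real_inner_smul_right]
  have e2 : ‖z - x‖ ^ 2 = L⁻¹ ^ 2 * ‖Δ‖ ^ 2 := by
    rw [hzx, norm_neg, norm_smul]
    simp [abs_of_pos (inv_pos.mpr hL), mul_pow]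
  have e3 : ⟪g y, z - y⟫ = ⟪g y, x - y⟫ - L⁻¹ * ⟪g y, Δ⟫ := by
    rw [hzy, inner_sub_right, real_inner_smul_right]
  have e4 : ⟪g x, Δ⟫ - ⟪g y, Δ⟫ = ‖Δ‖ ^ 2 := by
    rw [← inner_sub_left, ← hΔ, real_inner_self_eq_norm_sq]
  have hL' : L⁻¹ > 0 := inv_pos.mpr hL
  rw [e1, e2] at h2
  rw [e3] at h1
  have key : f y + ⟪g y, x - y⟫ + L⁻¹ * (⟪g x, Δ⟫ - ⟪g y, Δ⟫) - L / 2 * (L⁻¹ ^ 2 * ‖Δ‖ ^ 2) ≤ f x := by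
    linarith
  rw [e4] at key
  have hfield : L⁻¹ * ‖Δ‖ ^ 2 - L / 2 * (L⁻¹ ^ 2 * ‖Δ‖ ^ 2) = 1 / (2 * L) * ‖Δ‖ ^ 2 := by
    field_simp
    ring
  linarith

open Finset in
private theorem D_key (d n : ℕ) (hn : 0 < n)
    (f : Fin n → Euc d → ℝ) (f' : Fin n → Euc d → Euc d) (L : Fin n → ℝ)
    (hgrad : ∀ i x, HasGradientAt (f i) (f' i x) x)
    (hconv : ∀ i x y, f i x + ⟪f' i x, y - x⟫ ≤ f i y)
    (hLpos : ∀ i, 0 < L i)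
    (hsmooth : ∀ i x y, ‖f' i x - f' i y‖ ≤ L i * ‖x - y‖)
    (xstar : Euc d) (hmin : ∀ y, (1 / (n : ℝ)) * ∑ i, f i xstar ≤ (1 / (n : ℝ)) * ∑ i, f i y)
    (x : Euc d) :
    (1 / (n : ℝ)) * ∑ i, (1 / L i) * ‖f' i x - f' i xstar‖ ^ 2 ≤
      2 * ((1 / (n : ℝ)) * ∑ i, f i x - (1 / (n : ℝ)) * ∑ i, f i xstar) := by
  have hnpos : (0 : ℝ) < n := Nat.cast_pos.mpr hn
  -- gradient of average is zero at xstar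
  have hs : HasFDerivAt (fun y => ∑ i, f i y)
      (∑ i, InnerProductSpace.toDual ℝ (Euc d) (f' i xstar)) xstar :=
    HasFDerivAt.fun_sum fun i _ => (hgrad i xstar).hasFDerivAt
  have DF : HasFDerivAt (fun y => (1 / (n : ℝ)) * ∑ i, f i y)
      ((1 / (n : ℝ)) • ∑ i, InnerProductSpace.toDual ℝ (Euc d) (f' i xstar)) xstar :=
    hs.const_mul _
  have hloc : IsLocalMin (fun y => (1 / (n : ℝ)) * ∑ i, f i y) xstar :=
    Filter.Eventually.of_forall hmin
  have h0 := hloc.hasFDerivAt_eq_zero DF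
  have hsum0 : ∑ i, ⟪f' i xstar, x - xstar⟫ = 0 := by
    have := DFunLike.congr_fun h0 (x - xstar)
    simp only [ContinuousLinearMap.smul_apply, ContinuousLinearMap.coe_sum', Finset.sum_apply,
      InnerProductSpace.toDual_apply_apply, ContinuousLinearMap.zero_apply, smul_eq_mul] at this
    have h1n : (1 / (n : ℝ)) ≠ 0 := by positivity
    exact (mul_eq_zero.mp this).resolve_left h1n
  have hi : ∀ i : Fin n, (1 / L i) * ‖f' i x - f' i xstar‖ ^ 2 ≤
      2 * (f i x - f i xstar - ⟪f' i xstar, x - xstar⟫) := by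
    intro i
    have h := coco (f i) (f' i) (L i) (hLpos i) (hgrad i) (hconv i) (hsmooth i) x xstar
    have : (1 / L i) = 2 * (1 / (2 * L i)) := by
      rw [mul_one_div, div_eq_div_iff (hLpos i).ne' (mul_pos two_pos (hLpos i)).ne']; ring
    rw [this]
    nlinarith [h]
  have hsum := Finset.sum_le_sum (s := Finset.univ) (fun i _ => hi i)
  have hrhs : ∑ i, 2 * (f i x - f i xstar - ⟪f' i xstar, x - xstar⟫) =
      2 * (∑ i, f i x - ∑ i, f i xstar) := by
    rw [← Finset.mul_sum, Finset.sum_sub_distrib, Finset.sum_sub_distrib, hsum0, sub_zero]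
  have hS : ∑ i, (1 / L i) * ‖f' i x - f' i xstar‖ ^ 2 ≤
      2 * (∑ i, f i x - ∑ i, f i xstar) := hrhs ▸ hsum
  calc (1 / (n : ℝ)) * ∑ i, (1 / L i) * ‖f' i x - f' i xstar‖ ^ 2
      ≤ (1 / (n : ℝ)) * (2 * (∑ i, f i x - ∑ i, f i xstar)) :=
        mul_le_mul_of_nonneg_left hS (by positivity)
    _ = 2 * ((1 / (n : ℝ)) * ∑ i, f i x - (1 / (n : ℝ)) * ∑ i, f i xstar) := by ring

/-- recursion bound for the weighted distance `D`. -/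
theorem D_recursion_bound (d n : ℕ) (hd : 0 < d) (hn : 0 < n)
    (f : Fin n → Euc d → ℝ) (f' : Fin n → Euc d → Euc d) (L : Fin n → ℝ)
    (hgrad : ∀ i x, HasGradientAt (f i) (f' i x) x)
    (hconv : ∀ i x y, f i x + ⟪f' i x, y - x⟫ ≤ f i y)
    (hLpos : ∀ i, 0 < L i)
    (hsmooth : ∀ i x y, ‖f' i x - f' i y‖ ≤ L i * ‖x - y‖)
    (xstar : Euc d) (hmin : ∀ y, avgF n f xstar ≤ avgF n f y)
    (x w : Euc d) (ρ : ℝ) (hρ0 : 0 < ρ) (hρ1 : ρ ≤ 1) :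
    (ρ * Dfun n f' L xstar x + (1 - ρ) * Dfun n f' L xstar w ≤
      2 * ρ * (avgF n f x - avgF n f xstar) + (1 - ρ) * Dfun n f' L xstar w) ∧
    Dfun n f' L xstar x ≤ 2 * (avgF n f x - avgF n f xstar) := by
  have key : Dfun n f' L xstar x ≤ 2 * (avgF n f x - avgF n f xstar) := by
    simp only [Dfun, avgF]
    exact D_key d n hn f f' L hgrad hconv hLpos hsmooth xstar
      (fun y => by simpa [avgF] using hmin y) x
  exact ⟨by nlinarith [key], key⟩
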